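/- arXiv:1804.06569 — 8 statements merged into one kernel-verified Lean document; each statement's English description precedes it below -/
import Mathlib

section
/- Let V and W be finite-dimensional real inner product spaces, and let T : V → W be linear. Suppose {T_k} is a sequence of geometric functions from V to W converging to T, where for each k the conformality factor r_k of T_k satisfies 0 < p ≤ r_k for some fixed real p > 0. Then there exists K such that for all k > K, rank(T_k) = rank(T). -/
open scoped RealInnerProductSpace

/-- A linear map `f : V → W` between real inner product spaces is a *geometric function*
with conformality factor `r > 0` if there is a subspace `C` with `V = ker f ⊕ C`
(direct sum, not necessarily orthogonal) on which `f` scales inner products by `r`. -/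
def IsGeometric {V W : Type*} [NormedAddCommGroup V] [InnerProductSpace ℝ V]
    [NormedAddCommGroup W] [InnerProductSpace ℝ W] (f : V →L[ℝ] W) (r : ℝ) : Prop :=
  0 < r ∧ ∃ C : Submodule ℝ V, IsCompl (LinearMap.ker (f : V →ₗ[ℝ] W)) C ∧
    ∀ u ∈ C, ∀ v ∈ C, ⟪f u, f v⟫ = r * ⟪u, v⟫

set_option maxHeartbeats 1000000 in
/-- If a sequence of geometric functions `T k`, with conformality factors bounded below by
`p > 0`, converges to a linear map `T`, then eventually `rank (T k) = rank T`. -/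
theorem eventually_rank_eq_of_tendsto_geometric
    {V W : Type*} [NormedAddCommGroup V] [InnerProductSpace ℝ V] [FiniteDimensional ℝ V]
    [NormedAddCommGroup W] [InnerProductSpace ℝ W] [FiniteDimensional ℝ W]
    (T : V →L[ℝ] W) (Tk : ℕ → V →L[ℝ] W) (rk : ℕ → ℝ) (p : ℝ) (hp : 0 < p)
    (hpr : ∀ k, p ≤ rk k) (hgeo : ∀ k, IsGeometric (Tk k) (rk k))
    (hconv : Filter.Tendsto Tk Filter.atTop (nhds T)) :
    ∃ K : ℕ, ∀ k > K, Module.finrank ℝ (LinearMap.range (Tk k : V →ₗ[ℝ] W))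
      = Module.finrank ℝ (LinearMap.range (T : V →ₗ[ℝ] W)) := by
  classical
  set D : Submodule ℝ V := (LinearMap.ker (T : V →ₗ[ℝ] W))ᗮ with hD
  -- T restricted to D is injective
  set g : D →ₗ[ℝ] W := (T : V →ₗ[ℝ] W).comp D.subtype with hg
  have hginj : LinearMap.ker g = ⊥ := by
    rw [Submodule.eq_bot_iff]
    rintro ⟨v, hv⟩ hvg
    have hvk : v ∈ LinearMap.ker (T : V →ₗ[ℝ] W) := by
      simpa [hg, LinearMap.mem_ker] using hvg
    have h0 : ⟪v, v⟫ = 0 :=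
      (Submodule.mem_orthogonal (LinearMap.ker (T : V →ₗ[ℝ] W)) v).mp hv v hvk
    have : v = 0 := inner_self_eq_zero.mp h0
    simp [this]
  obtain ⟨c, hc0, hc⟩ := g.exists_antilipschitzWith hginj
  have hc0' : (0:ℝ) < (c:ℝ) := by exact_mod_cast hc0
  -- the key norm bound for v ∈ D
  have hTv : ∀ v ∈ D, ‖v‖ ≤ (c:ℝ) * ‖T v‖ := by
    intro v hv
    have := hc.le_mul_dist (⟨v, hv⟩ : D) 0
    simpa [hg, dist_eq_norm] using this
  set ε : ℝ := min (Real.sqrt p) ((2 * (c:ℝ))⁻¹) with hε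
  have hεpos : 0 < ε := lt_min (Real.sqrt_pos.mpr hp) (by positivity)
  obtain ⟨K, hK⟩ := (Metric.tendsto_atTop.mp hconv) ε hεpos
  refine ⟨K, fun k hk => ?_⟩
  have hdist : ‖Tk k - T‖ < ε := by
    have := hK k (le_of_lt hk)
    rwa [dist_eq_norm] at this
  obtain ⟨hr, C, hC, hinner⟩ := hgeo k
  -- basic rank-nullity facts
  have e1 : Module.finrank ℝ (LinearMap.range (Tk k : V →ₗ[ℝ] W)) +
      Module.finrank ℝ (LinearMap.ker (Tk k : V →ₗ[ℝ] W)) = Module.finrank ℝ V :=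
    LinearMap.finrank_range_add_finrank_ker ((Tk k) : V →ₗ[ℝ] W)
  have e4 : Module.finrank ℝ (LinearMap.range (T : V →ₗ[ℝ] W)) +
      Module.finrank ℝ (LinearMap.ker (T : V →ₗ[ℝ] W)) = Module.finrank ℝ V :=
    LinearMap.finrank_range_add_finrank_ker (T : V →ₗ[ℝ] W)
  have e2 : Module.finrank ℝ (LinearMap.ker (Tk k : V →ₗ[ℝ] W)) + Module.finrank ℝ C
      = Module.finrank ℝ V := Submodule.finrank_add_eq_of_isCompl hC
  have eD : Module.finrank ℝ (LinearMap.ker (T : V →ₗ[ℝ] W)) + Module.finrank ℝ D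
      = Module.finrank ℝ V := Submodule.finrank_add_finrank_orthogonal _
  -- Step A: ker T ⊓ C = ⊥
  have hA : (LinearMap.ker (T : V →ₗ[ℝ] W)) ⊓ C = ⊥ := by
    rw [Submodule.eq_bot_iff]
    intro u hu
    obtain ⟨huk, huC⟩ := Submodule.mem_inf.mp hu
    by_contra hu0
    have hnorm : 0 < ‖u‖ := norm_pos_iff.mpr hu0
    have h1 : ‖(Tk k) u‖ ^ 2 = rk k * ‖u‖ ^ 2 := by
      have := hinner u huC u huC
      rwa [real_inner_self_eq_norm_sq, real_inner_self_eq_norm_sq] at this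
    have hTu : T u = 0 := huk
    have h2 : ‖(Tk k) u‖ ≤ ‖Tk k - T‖ * ‖u‖ := by
      have := (Tk k - T).le_opNorm u
      simpa [hTu] using this
    have h3 : ‖(Tk k) u‖ < Real.sqrt p * ‖u‖ :=
      lt_of_le_of_lt h2 (by
        have : ε ≤ Real.sqrt p := min_le_left _ _
        exact mul_lt_mul_of_pos_right (lt_of_lt_of_le hdist this) hnorm)
    have hsq : Real.sqrt p ^ 2 = p := Real.sq_sqrt hp.le
    nlinarith [hpr k, norm_nonneg ((Tk k) u), Real.sqrt_nonneg p]
  have e3 : Module.finrank ℝ (LinearMap.ker (T : V →ₗ[ℝ] W)) + Module.finrank ℝ C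
      ≤ Module.finrank ℝ V := by
    have := Submodule.finrank_sup_add_finrank_inf_eq (LinearMap.ker (T : V →ₗ[ℝ] W)) C
    rw [hA, finrank_bot] at this
    have hle := Submodule.finrank_le ((LinearMap.ker (T : V →ₗ[ℝ] W)) ⊔ C)
    omega
  -- Step B: D ⊓ ker (Tk k) = ⊥
  have hB : D ⊓ (LinearMap.ker (Tk k : V →ₗ[ℝ] W)) = ⊥ := by
    rw [Submodule.eq_bot_iff]
    intro v hv
    obtain ⟨hvD, hvk⟩ := Submodule.mem_inf.mp hv
    by_contra hv0
    have hnorm : 0 < ‖v‖ := norm_pos_iff.mpr hv0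
    have hTkv : (Tk k) v = 0 := hvk
    have h2 : ‖T v‖ ≤ ‖Tk k - T‖ * ‖v‖ := by
      have := (Tk k - T).le_opNorm v
      rw [ContinuousLinearMap.sub_apply, hTkv, zero_sub, norm_neg] at this
      exact this
    have h3 : ‖T v‖ < (2 * c)⁻¹ * ‖v‖ :=
      lt_of_le_of_lt h2 (mul_lt_mul_of_pos_right
        (lt_of_lt_of_le hdist (min_le_right _ _)) hnorm)
    have h3' : ‖T v‖ < (2 * (c:ℝ))⁻¹ * ‖v‖ := by push_cast at h3; exact h3
    have h2c : (0:ℝ) < 2 * (c:ℝ) := by positivity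
    have h5 : 2 * (c:ℝ) * ‖T v‖ < ‖v‖ := by
      have := mul_lt_mul_of_pos_left h3' h2c
      rwa [mul_inv_cancel_left₀ (ne_of_gt h2c)] at this
    have h4 : ‖v‖ ≤ (c:ℝ) * ‖T v‖ := hTv v hvD
    nlinarith [norm_nonneg (T v), hc0']
  have e5 : Module.finrank ℝ D + Module.finrank ℝ (LinearMap.ker (Tk k : V →ₗ[ℝ] W))
      ≤ Module.finrank ℝ V := by
    have := Submodule.finrank_sup_add_finrank_inf_eq D (LinearMap.ker (Tk k : V →ₗ[ℝ] W))
    rw [hB, finrank_bot] at this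
    have hle := Submodule.finrank_le (D ⊔ LinearMap.ker (Tk k : V →ₗ[ℝ] W))
    omega
  omega
end

section
/- Let V and W be finite-dimensional real inner product spaces, T : V → W linear, and {T_k} a sequence of geometric functions converging to T with conformality factors r_k ≥ p > 0. If α ∈ ker(T) with ‖α‖ = 1, then for all sufficiently large k, α does not lie in the Conf subspace of T_k. Consequently ker(T) ∩ Conf(T_k) = {0} for all sufficiently large k. -/
open scoped RealInnerProductSpace

/-- `f` is a geometric function with conformality factor `r > 0` and Conf subspace `C`:
`V = ker f ⊕ C` (direct sum, not necessarily orthogonal) and `f` scales inner products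
by `r` on `C`. -/
def IsGeometricWith {V W : Type*} [NormedAddCommGroup V] [InnerProductSpace ℝ V]
    [NormedAddCommGroup W] [InnerProductSpace ℝ W]
    (f : V →L[ℝ] W) (r : ℝ) (C : Submodule ℝ V) : Prop :=
  0 < r ∧ IsCompl (LinearMap.ker (f : V →ₗ[ℝ] W)) C ∧
    ∀ u ∈ C, ∀ v ∈ C, ⟪f u, f v⟫ = r * ⟪u, v⟫

/-- If geometric functions `Tk k` with Conf subspaces `C k` and conformality factors bounded
below by `p > 0` converge to `T`, then any unit vector of `ker T` eventually avoids `C k`;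
consequently `ker T ∩ C k = {0}` for all sufficiently large `k`. -/
theorem eventually_ker_inf_conf_eq_bot
    {V W : Type*} [NormedAddCommGroup V] [InnerProductSpace ℝ V] [FiniteDimensional ℝ V]
    [NormedAddCommGroup W] [InnerProductSpace ℝ W] [FiniteDimensional ℝ W]
    (T : V →L[ℝ] W) (Tk : ℕ → V →L[ℝ] W) (rk : ℕ → ℝ) (C : ℕ → Submodule ℝ V)
    (p : ℝ) (hp : 0 < p) (hpr : ∀ k, p ≤ rk k)
    (hgeo : ∀ k, IsGeometricWith (Tk k) (rk k) (C k))
    (hconv : Filter.Tendsto Tk Filter.atTop (nhds T)) :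
    (∀ α : V, α ∈ LinearMap.ker (T : V →ₗ[ℝ] W) → ‖α‖ = 1 → ∃ K : ℕ, ∀ k > K, α ∉ C k) ∧
    (∃ K : ℕ, ∀ k > K, LinearMap.ker (T : V →ₗ[ℝ] W) ⊓ C k = ⊥) := by
  have key : ∀ k, ∀ x ∈ C k, p * ‖x‖ ^ 2 ≤ ‖Tk k x‖ ^ 2 := by
    intro k x hx
    have h := (hgeo k).2.2 x hx x hx
    rw [real_inner_self_eq_norm_sq, real_inner_self_eq_norm_sq] at h
    calc p * ‖x‖ ^ 2 ≤ rk k * ‖x‖ ^ 2 := by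
          exact mul_le_mul_of_nonneg_right (hpr k) (by positivity)
      _ = ‖Tk k x‖ ^ 2 := h.symm
  have hsp : (0:ℝ) < Real.sqrt p := Real.sqrt_pos.mpr hp
  obtain ⟨K, hK⟩ := (Metric.tendsto_atTop.mp hconv) (Real.sqrt p) hsp
  have main : ∀ k > K, ∀ x, x ∈ LinearMap.ker (T : V →ₗ[ℝ] W) → x ∈ C k → x = 0 := by
    intro k hk x hker hx
    by_contra hx0
    have hxn : 0 < ‖x‖ := norm_pos_iff.mpr hx0
    have hd : ‖Tk k - T‖ < Real.sqrt p := by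
      simpa [dist_eq_norm] using hK k (le_of_lt hk)
    have h1 : ‖Tk k x‖ ≤ ‖Tk k - T‖ * ‖x‖ := by
      have hT : T x = 0 := hker
      have : Tk k x = (Tk k - T) x := by simp [hT]
      rw [this]
      exact (Tk k - T).le_opNorm x
    have h2 : ‖Tk k x‖ < Real.sqrt p * ‖x‖ :=
      h1.trans_lt (by exact mul_lt_mul_of_pos_right hd hxn)
    have h3 : ‖Tk k x‖ ^ 2 < (Real.sqrt p * ‖x‖) ^ 2 := by
      have := pow_lt_pow_left₀ h2 (norm_nonneg _) two_ne_zero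
      simpa using this
    have h4 : (Real.sqrt p * ‖x‖) ^ 2 = p * ‖x‖ ^ 2 := by
      rw [mul_pow, Real.sq_sqrt hp.le]
    have := key k x hx
    linarith
  constructor
  · intro α hker hα
    exact ⟨K, fun k hk hmem => by
      have := main k hk α hker hmem
      rw [this] at hα; simp at hα⟩
  · exact ⟨K, fun k hk => by
      ext x
      simp only [Submodule.mem_inf, Submodule.mem_bot]
      constructor
      · rintro ⟨h1, h2⟩; exact main k hk x h1 h2
      · rintro rfl; simp⟩
end

section
/- Let V and W be finite-dimensional real inner product spaces, T : V → W linear, and T_k geometric functions converging to T with conformality factors bounded below by p > 0. Then for all sufficiently large k, rank(T_k) ≤ rank(T). -/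
open scoped RealInnerProductSpace

/-- If geometric functions `Tk k` with conformality factors bounded below by `p > 0`
converge to `T`, then eventually `rank (Tk k) ≤ rank T`. -/
theorem eventually_rank_le_of_tendsto_geometric
    {V W : Type*} [NormedAddCommGroup V] [InnerProductSpace ℝ V] [FiniteDimensional ℝ V]
    [NormedAddCommGroup W] [InnerProductSpace ℝ W] [FiniteDimensional ℝ W]
    (T : V →L[ℝ] W) (Tk : ℕ → V →L[ℝ] W) (rk : ℕ → ℝ) (C : ℕ → Submodule ℝ V)
    (p : ℝ) (hp : 0 < p) (hpr : ∀ k, p ≤ rk k)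
    (hgeo : ∀ k, IsGeometricWith (Tk k) (rk k) (C k))
    (hconv : Filter.Tendsto Tk Filter.atTop (nhds T)) :
    ∃ K : ℕ, ∀ k > K, Module.finrank ℝ (LinearMap.range (Tk k : V →ₗ[ℝ] W))
      ≤ Module.finrank ℝ (LinearMap.range (T : V →ₗ[ℝ] W)) := by
  have hdist : Filter.Tendsto (fun k => ‖Tk k - T‖) Filter.atTop (nhds 0) :=
    tendsto_iff_norm_sub_tendsto_zero.mp hconv
  have hsq : (0:ℝ) < Real.sqrt p := Real.sqrt_pos.mpr hp
  have hev : ∀ᶠ k in Filter.atTop, ‖Tk k - T‖ < Real.sqrt p :=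
    hdist.eventually_lt_const hsq
  obtain ⟨K, hK⟩ := Filter.eventually_atTop.mp hev
  refine ⟨K, fun k hk => ?_⟩
  obtain ⟨hr, hcompl, hip⟩ := hgeo k
  have hnorm : ‖Tk k - T‖ < Real.sqrt p := hK k (le_of_lt hk)
  -- ker T ∩ C k = 0
  have hdisj : ∀ x : V, x ∈ LinearMap.ker (T : V →ₗ[ℝ] W) → x ∈ C k → x = 0 := by
    intro x hxT hxC
    by_contra hx0
    have hxpos : (0:ℝ) < ‖x‖ := norm_pos_iff.mpr hx0
    have h1 : ⟪(Tk k) x, (Tk k) x⟫ = rk k * ⟪x, x⟫ := hip x hxC x hxC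
    rw [real_inner_self_eq_norm_sq, real_inner_self_eq_norm_sq] at h1
    have hTx : T x = 0 := hxT
    have h2 : (Tk k) x = (Tk k - T) x := by simp [hTx]
    have h3 : ‖(Tk k - T) x‖ ≤ ‖Tk k - T‖ * ‖x‖ := (Tk k - T).le_opNorm x
    have h4 : ‖(Tk k) x‖ ≤ ‖Tk k - T‖ * ‖x‖ := h2 ▸ h3
    have h5 : p * ‖x‖ ^ 2 ≤ rk k * ‖x‖ ^ 2 := by nlinarith [hpr k, sq_nonneg ‖x‖]
    have hsp : Real.sqrt p ^ 2 = p := Real.sq_sqrt hp.le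
    have hnn : (0:ℝ) ≤ ‖Tk k - T‖ := norm_nonneg _
    have h6 : ‖Tk k - T‖ * ‖x‖ < Real.sqrt p * ‖x‖ :=
      mul_lt_mul_of_pos_right hnorm hxpos
    have h7 : ‖(Tk k) x‖ < Real.sqrt p * ‖x‖ := lt_of_le_of_lt h4 h6
    nlinarith [norm_nonneg ((Tk k) x), mul_nonneg hnn hxpos.le]
  -- injective map ker T →ₗ ker (Tk k)
  let g : (LinearMap.ker (T : V →ₗ[ℝ] W)) →ₗ[ℝ] (LinearMap.ker (Tk k : V →ₗ[ℝ] W)) :=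
    (Submodule.linearProjOfIsCompl (LinearMap.ker (Tk k : V →ₗ[ℝ] W)) (C k) hcompl).comp
      (Submodule.subtype (LinearMap.ker (T : V →ₗ[ℝ] W)))
  have hginj : Function.Injective g := by
    rw [← LinearMap.ker_eq_bot, LinearMap.ker_eq_bot']
    intro m hm
    have : (m : V) ∈ C k :=
      (Submodule.linearProjOfIsCompl_apply_eq_zero_iff hcompl).mp hm
    exact Subtype.ext (hdisj m m.2 this)
  have hker : Module.finrank ℝ (LinearMap.ker (T : V →ₗ[ℝ] W)) ≤ Module.finrank ℝ (LinearMap.ker (Tk k : V →ₗ[ℝ] W)) :=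
    LinearMap.finrank_le_finrank_of_injective hginj
  have e1 : Module.finrank ℝ (LinearMap.range (Tk k : V →ₗ[ℝ] W)) + Module.finrank ℝ (LinearMap.ker (Tk k : V →ₗ[ℝ] W))
      = Module.finrank ℝ V := LinearMap.finrank_range_add_finrank_ker ((Tk k) : V →ₗ[ℝ] W)
  have e2 : Module.finrank ℝ (LinearMap.range (T : V →ₗ[ℝ] W)) + Module.finrank ℝ (LinearMap.ker (T : V →ₗ[ℝ] W))
      = Module.finrank ℝ V := LinearMap.finrank_range_add_finrank_ker (T : V →ₗ[ℝ] W)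
  omega
end

section
/- Let f : V → W be a linear map between finite-dimensional real inner product spaces that is a geometric function with conformality factor r and Conf subspace C. Then the Frobenius norm of f satisfies ‖f‖_F² ≥ r · rank(f). -/
open scoped RealInnerProductSpace

lemma trace_eq_sum_inner' {V : Type*} [NormedAddCommGroup V] [InnerProductSpace ℝ V]
    [FiniteDimensional ℝ V] {ι : Type*} [Fintype ι] [DecidableEq ι]
    (b : OrthonormalBasis ι ℝ V) (T : V →ₗ[ℝ] V) :
    LinearMap.trace ℝ V T = ∑ i, ⟪b i, T (b i)⟫ := by
  rw [LinearMap.trace_eq_matrix_trace ℝ b.toBasis, Matrix.trace]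
  congr 1
  ext i
  rw [Matrix.diag_apply, LinearMap.toMatrix_apply, OrthonormalBasis.coe_toBasis,
    OrthonormalBasis.coe_toBasis_repr_apply, OrthonormalBasis.repr_apply_apply,
    real_inner_comm]


/-- The squared Frobenius norm of a continuous linear map between finite-dimensional
real inner product spaces: `‖f‖_F² = trace (f* ∘ f)`. -/
noncomputable def frobSq {V W : Type*}
    [NormedAddCommGroup V] [InnerProductSpace ℝ V] [FiniteDimensional ℝ V]
    [NormedAddCommGroup W] [InnerProductSpace ℝ W] [FiniteDimensional ℝ W]
    (f : V →L[ℝ] W) : ℝ :=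
  LinearMap.trace ℝ V ((ContinuousLinearMap.adjoint f).comp f : V →ₗ[ℝ] V)

/-- A geometric function `f` with conformality factor `r` and Conf subspace `C` satisfies
`‖f‖_F² ≥ r · rank f`. -/
theorem frobSq_ge_of_geometric
    {V W : Type*} [NormedAddCommGroup V] [InnerProductSpace ℝ V] [FiniteDimensional ℝ V]
    [NormedAddCommGroup W] [InnerProductSpace ℝ W] [FiniteDimensional ℝ W]
    (f : V →L[ℝ] W) (r : ℝ) (C : Submodule ℝ V) (hgeo : IsGeometricWith f r C) :
    r * (Module.finrank ℝ (LinearMap.range (f : V →ₗ[ℝ] W)) : ℝ) ≤ frobSq f := by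
  rw [frobSq]
  obtain ⟨hr, hcompl, hconf⟩ := hgeo
  classical
  set K : Submodule ℝ V := LinearMap.ker (f : V →ₗ[ℝ] W) with hK
  have hKC : IsCompl C K := hcompl.symm
  set π := Submodule.linearProjOfIsCompl C K hKC with hπ
  have hsub : ∀ x : V, x - (π x : V) ∈ K := by
    intro x
    have h0 : π (x - π x) = 0 := by
      rw [map_sub]
      exact sub_eq_zero.mpr (Submodule.linearProjOfIsCompl_apply_left hKC _).symm
    exact (Submodule.linearProjOfIsCompl_apply_eq_zero_iff hKC).mp h0
  -- key pointwise bound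
  have hkey : ∀ e : V, e ∈ Kᗮ → ‖e‖ = 1 → r ≤ ⟪f e, f e⟫ := by
    intro e heK hnorm
    have hfe : f e = f (π e : V) := by
      have : f (e - (π e : V)) = 0 := LinearMap.mem_ker.mp (hsub e)
      have := sub_eq_zero.mp (by simpa [map_sub] using this)
      exact this
    have hconf' : ⟪f (π e : V), f (π e : V)⟫ = r * ‖(π e : V)‖ ^ 2 := by
      rw [hconf _ (π e).2 _ (π e).2, real_inner_self_eq_norm_sq]
    have horth : ⟪e, (π e : V) - e⟫ = 0 := by
      have hmem : (π e : V) - e ∈ K := by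
        have := hsub e
        simpa using K.neg_mem this
      rw [real_inner_comm]
      exact (Submodule.mem_orthogonal K e).mp heK _ hmem
    have hnormge : (1 : ℝ) ≤ ‖(π e : V)‖ ^ 2 := by
      have heq : (π e : V) = e + ((π e : V) - e) := by abel
      have h := norm_add_sq_eq_norm_sq_add_norm_sq_real horth
      rw [← heq] at h
      rw [pow_two, h, hnorm]
      nlinarith [norm_nonneg ((π e : V) - e)]
    calc r = r * 1 := by ring
    _ ≤ r * ‖(π e : V)‖ ^ 2 := by nlinarith
    _ = ⟪f e, f e⟫ := by rw [hfe, hconf']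
  -- orthonormal basis adapted to K ⊕ Kᗮ
  set A : Bool → Submodule ℝ V := fun b => cond b K Kᗮ with hA
  have hInt : DirectSum.IsInternal A := by
    rw [DirectSum.isInternal_submodule_iff_isCompl _ (i := true) (j := false)
      (by simp) (by ext x; simp)]
    exact Submodule.isCompl_orthogonal_of_hasOrthogonalProjection
  let b := hInt.collectedOrthonormalBasis (Submodule.orthogonalFamily_self K)
    (fun i => stdOrthonormalBasis ℝ (A i))
  have hmem := hInt.collectedOrthonormalBasis_mem (Submodule.orthogonalFamily_self K)
    (fun i => stdOrthonormalBasis ℝ (A i))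
  have hbnorm : ∀ i, ‖b i‖ = 1 := fun i => b.orthonormal.1 i
  rw [trace_eq_sum_inner' b]
  have hterm : ∀ i, ⟪b i, ((ContinuousLinearMap.adjoint f).comp f : V →ₗ[ℝ] V) (b i)⟫
      = ⟪f (b i), f (b i)⟫ := by
    intro i
    simp [ContinuousLinearMap.adjoint_inner_right]
  simp_rw [hterm]
  rw [← Finset.univ_sigma_univ, Finset.sum_sigma, Fintype.sum_bool]
  have htrue : ∀ j : Fin (Module.finrank ℝ K),
      ⟪f (b ⟨true, j⟩), f (b ⟨true, j⟩)⟫ = 0 := by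
    intro j
    have : f (b ⟨true, j⟩) = 0 := LinearMap.mem_ker.mp (hmem ⟨true, j⟩)
    simp [this]
  have hfalse : ∀ j : Fin (Module.finrank ℝ Kᗮ),
      r ≤ ⟪f (b ⟨false, j⟩), f (b ⟨false, j⟩)⟫ := by
    intro j
    exact hkey _ (hmem ⟨false, j⟩) (hbnorm _)
  have hdim : Module.finrank ℝ (LinearMap.range (f : V →ₗ[ℝ] W)) = Module.finrank ℝ Kᗮ := by
    have h1 := LinearMap.finrank_range_add_finrank_ker (f : V →ₗ[ℝ] W)
    have hker : LinearMap.ker (f : V →ₗ[ℝ] W) = K := rfl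
    have hrange : LinearMap.range (f : V →ₗ[ℝ] W) = LinearMap.range (f : V →ₗ[ℝ] W) := rfl
    rw [hker, hrange] at h1
    have h2 := Submodule.finrank_add_finrank_orthogonal (K := K)
    omega
  have hbound : r * (Module.finrank ℝ Kᗮ : ℝ) ≤
      ∑ j : Fin (Module.finrank ℝ Kᗮ), ⟪f (b ⟨false, j⟩), f (b ⟨false, j⟩)⟫ := by
    calc r * (Module.finrank ℝ Kᗮ : ℝ)
        = ∑ _j : Fin (Module.finrank ℝ Kᗮ), r := by simp [mul_comm]
      _ ≤ _ := Finset.sum_le_sum fun j _ => hfalse j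
  simp only [htrue, Finset.sum_const_zero, zero_add]
  rw [hdim]
  exact hbound
end

section
/- Let f : V → W be a linear map between finite-dimensional real inner product spaces and let H be a subspace with V = H ⊕ ker(f) (direct sum). Define f_H^◇ : W → V by f_H^◇(y) = (f|_H)*(y_1) where y = y_1 + y_2 with y_1 ∈ range(f), y_2 ∈ range(f)^⊥, and (f|_H)* is the adjoint of f|_H : H → range(f). Let P = f_H^◇ ∘ f. Then f is a geometric function with Conf subspace H and conformality factor r > 0 if and only if P ∘ P = r · P. -/
open scoped RealInnerProductSpace

/-- With `V = H ⊕ ker f` and `D = f_H^◇` (the adjoint of `f|_H : H → range f` on `range f`,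
zero on `(range f)ᗮ`), setting `P = f_H^◇ ∘ f`, the map `f` is a geometric function with
Conf subspace `H` and conformality factor `r > 0` if and only if `P ∘ P = r • P`. -/
theorem isGeometricWith_iff_P_comp_P
    {V W : Type*} [NormedAddCommGroup V] [InnerProductSpace ℝ V] [FiniteDimensional ℝ V]
    [NormedAddCommGroup W] [InnerProductSpace ℝ W] [FiniteDimensional ℝ W]
    (f : V →L[ℝ] W) (H : Submodule ℝ V) (hH : IsCompl (LinearMap.ker (f : V →ₗ[ℝ] W)) H)
    (D : W →L[ℝ] V)
    (hD0 : ∀ y ∈ (LinearMap.range (f : V →ₗ[ℝ] W))ᗮ, D y = 0)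
    (hDmem : ∀ y : W, D y ∈ H)
    (hDadj : ∀ u ∈ H, ∀ y ∈ LinearMap.range (f : V →ₗ[ℝ] W), ⟪f u, y⟫ = ⟪u, D y⟫)
    (r : ℝ) (hr : 0 < r) :
    IsGeometricWith f r H ↔ (D.comp f).comp (D.comp f) = r • D.comp f := by
  have hadj : ∀ u ∈ H, ∀ x : V, ⟪f u, f x⟫ = ⟪u, D (f x)⟫ := by
    intro u hu x
    exact hDadj u hu (f x) ⟨x, rfl⟩
  constructor
  · rintro ⟨-, -, hgeo⟩
    ext v
    simp only [ContinuousLinearMap.comp_apply, ContinuousLinearMap.smul_apply]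
    set P : V → V := fun x => D (f x) with hP
    have hq : P (P v) - r • P v = 0 := by
      set q : V := P (P v) - r • P v with hqdef
      have hqH : q ∈ H := H.sub_mem (hDmem _) (H.smul_mem _ (hDmem _))
      have h1 : ⟪q, P (P v)⟫ = r * ⟪q, P v⟫ := by
        rw [← hadj q hqH (P v)]
        exact hgeo q hqH (P v) (hDmem _)
      have h2 : ⟪q, q⟫ = 0 := by
        rw [hqdef, inner_sub_right, h1, inner_smul_right]
        ring
      simpa [hqdef] using inner_self_eq_zero.mp h2
    have := sub_eq_zero.mp hq
    simpa using this
  · intro hPP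
    refine ⟨hr, hH, ?_⟩
    intro u hu v hv
    have hPv : D (f v) = r • v := by
      set e : V := D (f v) - r • v with hedef
      have heH : e ∈ H := H.sub_mem (hDmem _) (H.smul_mem _ hv)
      have hPe : D (f e) = 0 := by
        have := congrArg (fun (g : V →L[ℝ] V) => g v) hPP
        simp only [ContinuousLinearMap.comp_apply, ContinuousLinearMap.smul_apply] at this
        simp [hedef, map_sub, map_smul, this]
      have hfe : f e = 0 := by
        have h0 : ⟪f e, f e⟫ = 0 := by
          rw [hadj e heH e, hPe, inner_zero_right]
        exact inner_self_eq_zero.mp h0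
      have : e = 0 :=
        (Submodule.disjoint_def.mp hH.disjoint) e (LinearMap.mem_ker.mpr hfe) heH
      have := sub_eq_zero.mp (hedef ▸ this)
      exact this
    rw [hadj u hu v, hPv, inner_smul_right]
end

section
/- Let f : V → W be a linear map between finite-dimensional real inner product spaces and let H be a subspace with V = H ⊕ ker(f). Define f_H^◇ : W → V as the adjoint of f|_H : H → range(f) on range(f) and zero on range(f)^⊥, and let Q = f ∘ f_H^◇ : W → W. Then f is a geometric function with Conf subspace H and conformality factor r > 0 if and only if Q ∘ Q = r · Q. -/
open scoped RealInnerProductSpace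

/-- With `V = H ⊕ ker f` and `D = f_H^◇`, setting `Q = f ∘ f_H^◇ : W → W`, the map `f` is a
geometric function with Conf subspace `H` and conformality factor `r > 0` if and only if
`Q ∘ Q = r • Q`. -/
theorem isGeometricWith_iff_Q_comp_Q
    {V W : Type*} [NormedAddCommGroup V] [InnerProductSpace ℝ V] [FiniteDimensional ℝ V]
    [NormedAddCommGroup W] [InnerProductSpace ℝ W] [FiniteDimensional ℝ W]
    (f : V →L[ℝ] W) (H : Submodule ℝ V) (hH : IsCompl (LinearMap.ker (f : V →ₗ[ℝ] W)) H)
    (D : W →L[ℝ] V)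
    (hD0 : ∀ y ∈ (LinearMap.range (f : V →ₗ[ℝ] W))ᗮ, D y = 0)
    (hDmem : ∀ y : W, D y ∈ H)
    (hDadj : ∀ u ∈ H, ∀ y ∈ LinearMap.range (f : V →ₗ[ℝ] W), ⟪f u, y⟫ = ⟪u, D y⟫)
    (r : ℝ) (hr : 0 < r) :
    IsGeometricWith f r H ↔ (f.comp D).comp (f.comp D) = r • f.comp D := by
  have hinj : ∀ v ∈ H, f v = 0 → v = 0 := by
    intro v hv hfv
    have hm : v ∈ LinearMap.ker (f : V →ₗ[ℝ] W) ⊓ H := ⟨LinearMap.mem_ker.mpr hfv, hv⟩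
    rwa [hH.inf_eq_bot, Submodule.mem_bot] at hm
  constructor
  · rintro ⟨-, -, hconf⟩
    ext y
    have hu : D y ∈ H := hDmem y
    have key : D (f (D y)) = r • D y := by
      have hmem : D (f (D y)) ∈ H := hDmem _
      have hmem' : D (f (D y)) - r • D y ∈ H := H.sub_mem hmem (H.smul_mem r hu)
      have h1 : ∀ u' ∈ H, ⟪u', D (f (D y)) - r • D y⟫ = 0 := by
        intro u' hu'
        have h2 := hDadj u' hu' (f (D y)) ⟨D y, rfl⟩
        rw [inner_sub_right, ← h2, hconf u' hu' (D y) hu, real_inner_smul_right]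
        ring
      have h3 := h1 _ hmem'
      rw [inner_self_eq_zero] at h3
      exact sub_eq_zero.mp h3
    simp [ContinuousLinearMap.comp_apply, key, map_smul]
  · intro hQ
    refine ⟨hr, hH, ?_⟩
    have hadj : ∀ u ∈ H, ∀ w : V, ⟪f u, f w⟫ = ⟪u, D (f w)⟫ := by
      intro u hu w
      exact hDadj u hu (f w) ⟨w, rfl⟩
    have hT2 : ∀ v : V, D (f (D (f v))) = r • D (f v) := by
      intro v
      have h := DFunLike.congr_fun hQ (f v)
      simp only [ContinuousLinearMap.comp_apply, ContinuousLinearMap.smul_apply] at h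
      have hk : f (D (f (D (f v))) - r • D (f v)) = 0 := by
        rw [map_sub, map_smul, h, sub_self]
      have hm : D (f (D (f v))) - r • D (f v) ∈ H :=
        H.sub_mem (hDmem _) (H.smul_mem r (hDmem _))
      have := hinj _ hm hk
      exact sub_eq_zero.mp this
    have hTr : ∀ v ∈ H, D (f v) = r • v := by
      intro v hv
      have hm : D (f v) - r • v ∈ H := H.sub_mem (hDmem _) (H.smul_mem r hv)
      have h0 : f (D (f v) - r • v) = 0 := by
        have h4 : ⟪f (D (f v) - r • v), f (D (f v) - r • v)⟫ = 0 := by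
          rw [hadj _ hm, map_sub, map_smul, map_sub, map_smul, hT2 v]
          simp
        rwa [inner_self_eq_zero] at h4
      exact sub_eq_zero.mp (hinj _ hm h0)
    intro u hu v hv
    rw [hadj u hu v, hTr v hv, real_inner_smul_right]
end

section
/- Let f : V → W be a linear map between finite-dimensional real inner product spaces with H = ker(f)^⊥. Then f is a geometric function with Conf subspace H and conformality factor r > 0 if and only if (f* ∘ f)² = r · (f* ∘ f), where f* is the adjoint of f. -/
open scoped RealInnerProductSpace

/-- With `H = (ker f)ᗮ`, the map `f` is a geometric function with Conf subspace `H` and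
conformality factor `r > 0` if and only if `(f* ∘ f)² = r • (f* ∘ f)`. -/
theorem isGeometricWith_orthogonal_iff_adjoint_comp
    {V W : Type*} [NormedAddCommGroup V] [InnerProductSpace ℝ V] [FiniteDimensional ℝ V]
    [NormedAddCommGroup W] [InnerProductSpace ℝ W] [FiniteDimensional ℝ W]
    (f : V →L[ℝ] W) (r : ℝ) (hr : 0 < r) :
    IsGeometricWith f r (LinearMap.ker (f : V →ₗ[ℝ] W))ᗮ ↔
      ((ContinuousLinearMap.adjoint f).comp f).comp ((ContinuousLinearMap.adjoint f).comp f)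
        = r • (ContinuousLinearMap.adjoint f).comp f := by
  set T : V →L[ℝ] V := (ContinuousLinearMap.adjoint f).comp f with hT
  have hTinn : ∀ x y : V, ⟪T x, y⟫ = ⟪f x, f y⟫ := by
    intro x y
    simp [hT, ContinuousLinearMap.adjoint_inner_left]
  have hTmem : ∀ x : V, T x ∈ (LinearMap.ker (f : V →ₗ[ℝ] W))ᗮ := by
    intro x
    rw [Submodule.mem_orthogonal]
    intro k hk
    rw [real_inner_comm, hTinn]
    simp [show f k = 0 from LinearMap.mem_ker.mp hk]
  constructor
  · rintro ⟨-, -, hf⟩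
    have key : ∀ y ∈ (LinearMap.ker (f : V →ₗ[ℝ] W))ᗮ, T y = r • y := by
      intro y hy
      have hx : T y - r • y ∈ (LinearMap.ker (f : V →ₗ[ℝ] W))ᗮ :=
        Submodule.sub_mem _ (hTmem y) (Submodule.smul_mem _ r hy)
      have h0 : ⟪T y - r • y, T y - r • y⟫ = 0 := by
        rw [inner_sub_left, hTinn, hf y hy _ hx, real_inner_smul_left]
        ring
      exact sub_eq_zero.mp (inner_self_eq_zero.mp h0)
    ext x
    have h1 : T (T x) = r • T x := key (T x) (hTmem x)
    simpa using h1
  · intro heq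
    refine ⟨hr, Submodule.isCompl_orthogonal_of_hasOrthogonalProjection, ?_⟩
    intro u hu v hv
    have hker : T u - r • u ∈ LinearMap.ker (f : V →ₗ[ℝ] W) := by
      have hT0 : T (T u - r • u) = 0 := by
        have := congrFun (congrArg DFunLike.coe heq) u
        simpa [map_sub, map_smul, sub_eq_zero] using this
      have : ⟪f (T u - r • u), f (T u - r • u)⟫ = 0 := by
        rw [← hTinn, hT0, inner_zero_left]
      simpa [LinearMap.mem_ker] using inner_self_eq_zero.mp this
    have : ⟪T u - r • u, v⟫ = 0 := hv _ hker
    rw [inner_sub_left, real_inner_smul_left, sub_eq_zero] at this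
    rw [← hTinn, this]
end

section
/- The smooth map f : ℝ³ → ℝ², f(x, y, z) = λ(x + y, z) for a fixed nonzero real λ, is a conformal Riemannian morphism with constant Riemannian factor λ², and satisfies ‖df_x‖_F² = 3λ² > λ² · rank(df_x) = 2λ² at every point; in particular a conformal Riemannian morphism need not satisfy ‖df_x‖_F² = Λ_f(x) · rank(df_x). -/
open scoped RealInnerProductSpace

/-- The smooth (linear) map `f : ℝ³ → ℝ²`, `f (x, y, z) = λ (x + y, z)` with `λ ≠ 0`, has
differential `T` at every point; `T` is a geometric function (so `f` is a conformal
Riemannian morphism) with constant conformality factor `λ²`, and it satisfies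
`‖df_x‖_F² = 3 λ² > λ² · rank (df_x) = 2 λ²`.  In particular a conformal Riemannian
morphism need not satisfy `‖df_x‖_F² = Λ_f(x) · rank (df_x)`. -/
theorem example_crm_strict_frobenius_inequality (lam : ℝ) (hlam : lam ≠ 0)
    (T : EuclideanSpace ℝ (Fin 3) →L[ℝ] EuclideanSpace ℝ (Fin 2))
    (hT : ∀ v : EuclideanSpace ℝ (Fin 3), T v = ![lam * (v 0 + v 1), lam * v 2]) :
    (∀ x : EuclideanSpace ℝ (Fin 3), fderiv ℝ (⇑T) x = T) ∧
    IsGeometric T (lam ^ 2) ∧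
    frobSq T = 3 * lam ^ 2 ∧
    Module.finrank ℝ (LinearMap.range (T : EuclideanSpace ℝ (Fin 3) →ₗ[ℝ] EuclideanSpace ℝ (Fin 2))) = 2 ∧
    lam ^ 2 * (Module.finrank ℝ (LinearMap.range (T : EuclideanSpace ℝ (Fin 3) →ₗ[ℝ] EuclideanSpace ℝ (Fin 2))) : ℝ) < frobSq T := by
  have hlsq : (0:ℝ) < lam ^ 2 := by positivity
  have hT0 : ∀ v : EuclideanSpace ℝ (Fin 3), T v 0 = lam * (v 0 + v 1) := by
    intro v; rw [hT]; rfl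
  have hT1 : ∀ v : EuclideanSpace ℝ (Fin 3), T v 1 = lam * v 2 := by
    intro v; rw [hT]; rfl
  -- Frobenius norm computation
  have hfrob : frobSq T = 3 * lam ^ 2 := by
    set S : EuclideanSpace ℝ (Fin 3) →ₗ[ℝ] EuclideanSpace ℝ (Fin 3) :=
      ((ContinuousLinearMap.adjoint T).comp T :
        EuclideanSpace ℝ (Fin 3) →ₗ[ℝ] EuclideanSpace ℝ (Fin 3)) with hS
    have htr : frobSq T = ∑ i : Fin 3, S (EuclideanSpace.single i 1) i := by
      unfold frobSq
      rw [← hS, LinearMap.trace_eq_matrix_trace ℝ (EuclideanSpace.basisFun (Fin 3) ℝ).toBasis]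
      simp [Matrix.trace, LinearMap.toMatrix_apply, EuclideanSpace.basisFun_apply]
    rw [htr]
    have hcoord : ∀ i : Fin 3,
        S (EuclideanSpace.single i 1) i
        = ⟪T (EuclideanSpace.single i 1), T (EuclideanSpace.single i 1)⟫ := by
      intro i
      have h1 : S (EuclideanSpace.single i 1) i
          = ⟪EuclideanSpace.single i (1:ℝ),
              (ContinuousLinearMap.adjoint T) (T (EuclideanSpace.single i 1))⟫ := by
        rw [EuclideanSpace.inner_single_left]; simp [hS]
      rw [h1, ContinuousLinearMap.adjoint_inner_right]
    simp only [hcoord]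
    have hnorm : ∀ i : Fin 3,
        ⟪T (EuclideanSpace.single i 1), T (EuclideanSpace.single i 1)⟫
        = (T (EuclideanSpace.single i 1) 0)^2 + (T (EuclideanSpace.single i 1) 1)^2 := by
      intro i
      rw [PiLp.inner_apply]
      simp [Fin.sum_univ_two, RCLike.inner_apply]
    simp only [hnorm, hT0, hT1, Fin.sum_univ_three]
    simp [EuclideanSpace.single_apply]
    ring
  -- range is everything
  have hrange : LinearMap.range (T : EuclideanSpace ℝ (Fin 3) →ₗ[ℝ] EuclideanSpace ℝ (Fin 2)) = ⊤ := by
    rw [LinearMap.range_eq_top]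
    intro w
    refine ⟨WithLp.toLp 2 ![w 0 / lam, 0, w 1 / lam], ?_⟩
    ext i
    fin_cases i
    · show T (WithLp.toLp 2 ![w 0 / lam, 0, w 1 / lam]) 0 = w 0
      rw [hT0]; show lam * (w 0 / lam + 0) = w 0; field_simp; ring
    · show T (WithLp.toLp 2 ![w 0 / lam, 0, w 1 / lam]) 1 = w 1
      rw [hT1]; show lam * (w 1 / lam) = w 1; field_simp
  have hrk : Module.finrank ℝ (LinearMap.range (T : EuclideanSpace ℝ (Fin 3) →ₗ[ℝ] EuclideanSpace ℝ (Fin 2))) = 2 := by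
    rw [hrange]
    simp [finrank_top]
  refine ⟨fun x => T.fderiv, ?_, hfrob, hrk, ?_⟩
  · -- IsGeometric
    refine ⟨hlsq, ?_⟩
    refine ⟨{ carrier := {v : EuclideanSpace ℝ (Fin 3) | v 1 = 0},
              add_mem' := ?_, zero_mem' := rfl, smul_mem' := ?_ }, ?_, ?_⟩
    · intro a b ha hb
      show (a + b) 1 = 0
      have ha' : a 1 = 0 := ha
      have hb' : b 1 = 0 := hb
      simp [PiLp.add_apply, ha', hb']
    · intro c a ha
      show (c • a) 1 = 0
      have ha' : a 1 = 0 := ha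
      simp [PiLp.smul_apply, ha']
    · constructor
      · -- disjoint
        rw [Submodule.disjoint_def]
        intro v hv hvC
        have h0 : T v = 0 := hv
        have h1 : v 1 = 0 := hvC
        have e0 : lam * (v 0 + v 1) = 0 := by rw [← hT0]; exact congrArg (fun x : EuclideanSpace ℝ (Fin 2) => x 0) h0
        have e2 : lam * v 2 = 0 := by rw [← hT1]; exact congrArg (fun x : EuclideanSpace ℝ (Fin 2) => x 1) h0
        have hv0 : v 0 = 0 := by
          have := mul_eq_zero.mp e0
          rcases this with h | h
          · exact absurd h hlam
          · linarith
        have hv2 : v 2 = 0 := by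
          rcases mul_eq_zero.mp e2 with h | h
          · exact absurd h hlam
          · exact h
        ext i
        fin_cases i
        · exact hv0
        · exact h1
        · exact hv2
      · -- codisjoint
        rw [codisjoint_iff, Submodule.eq_top_iff']
        intro v
        rw [Submodule.mem_sup]
        refine ⟨WithLp.toLp 2 ![-v 1, v 1, 0], ?_, WithLp.toLp 2 ![v 0 + v 1, 0, v 2], rfl, ?_⟩
        · show T (WithLp.toLp 2 ![-v 1, v 1, 0]) = 0
          ext i
          fin_cases i
          · show T (WithLp.toLp 2 ![-v 1, v 1, 0]) 0 = 0
            rw [hT0]; show lam * (-v 1 + v 1) = 0; ring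
          · show T (WithLp.toLp 2 ![-v 1, v 1, 0]) 1 = 0
            rw [hT1]; show lam * 0 = 0; ring
        · ext i
          fin_cases i
          · show (-v 1) + (v 0 + v 1) = v 0; ring
          · show v 1 + 0 = v 1; ring
          · show 0 + v 2 = v 2; ring
    · intro u hu v hv
      have hu' : u 1 = 0 := hu
      have hv' : v 1 = 0 := hv
      rw [PiLp.inner_apply, PiLp.inner_apply]
      simp only [RCLike.inner_apply, conj_trivial, Fin.sum_univ_two, Fin.sum_univ_three,
        hT0, hT1, hu', hv']
      ring
  · rw [hfrob, hrk]
    norm_num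
    nlinarith
end
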